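/- Let G be a connected bipartite graph. If S is a general position set of G with |S| ≥ 3, then S is an independent set. -/
import Mathlib


open SimpleGraph

/-- The interval `I[u,v]`: vertices lying on some `u,v`-geodesic. -/
def gpInterval {V : Type*} (G : SimpleGraph V) (u v : V) : Set V :=
  {x | G.dist u x + G.dist x v = G.dist u v}

/-- `S` is a general position set: no three distinct vertices of `S` lie on a common geodesic. -/
def IsGPSet {V : Type*} (G : SimpleGraph V) (S : Set V) : Prop :=
  ∀ u ∈ S, ∀ v ∈ S, ∀ w ∈ S, u ≠ v → u ≠ w → v ≠ w → w ∉ gpInterval G u v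

private lemma fin2_iff (a b d : Fin 2) (h : a ≠ b) : a = d ↔ b ≠ d := by
  fin_cases a <;> fin_cases b <;> fin_cases d <;> simp_all

private lemma walk_parity {V : Type*} {G : SimpleGraph V} (c : G.Coloring (Fin 2))
    {u v : V} (p : G.Walk u v) : (c u = c v) ↔ Even p.length := by
  induction p with
  | nil => simp
  | @cons a b v h p ih =>
    have hne : c a ≠ c b := c.valid h
    rw [Walk.length_cons, Nat.even_add_one, ← ih, fin2_iff _ _ _ hne]

private lemma dist_parity {V : Type*} {G : SimpleGraph V} (hG : G.Connected)
    (c : G.Coloring (Fin 2)) (u v : V) : (c u = c v) ↔ Even (G.dist u v) := by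
  obtain ⟨p, hp⟩ := (hG u v).exists_walk_length_eq_dist
  rw [← hp]
  exact walk_parity c p

private lemma fin2_contra (a b d : Fin 2) (h : b ≠ d) : (a = b) ↔ ¬ (a = d) := by
  fin_cases a <;> fin_cases b <;> fin_cases d <;> simp_all

theorem stmt_2 {V : Type*} [Fintype V] (G : SimpleGraph V) (hG : G.Connected)
    (hbip : G.Colorable 2) (S : Set V) (hS : IsGPSet G S) (hcard : 3 ≤ S.ncard) :
    ∀ u ∈ S, ∀ v ∈ S, ¬ G.Adj u v := by
  obtain ⟨c⟩ := hbip
  intro u hu v hv hadj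
  have huv : u ≠ v := G.ne_of_adj hadj
  have hwex : (S \ {u, v}).Nonempty := by
    by_contra h
    rw [Set.not_nonempty_iff_eq_empty, Set.diff_eq_empty] at h
    have h1 := Set.ncard_le_ncard h (Set.toFinite _)
    have h2 : ({u, v} : Set V).ncard ≤ 2 := by
      have := Set.ncard_insert_le u ({v} : Set V)
      simpa using this
    omega
  obtain ⟨w, hwS, hwne⟩ := hwex
  simp only [Set.mem_insert_iff, Set.mem_singleton_iff, not_or] at hwne
  obtain ⟨hwu, hwv⟩ := hwne
  have hd1 : G.dist u v = 1 := SimpleGraph.dist_eq_one_iff_adj.mpr hadj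
  have hd1' : G.dist v u = 1 := by rw [SimpleGraph.dist_comm]; exact hd1
  have ht1 : G.dist w u ≤ G.dist w v + 1 := by
    have := hG.dist_triangle (u := w) (v := v) (w := u); omega
  have ht2 : G.dist w v ≤ G.dist w u + 1 := by
    have := hG.dist_triangle (u := w) (v := u) (w := v); omega
  have hpu := dist_parity hG c w u
  have hpv := dist_parity hG c w v
  have hcuv : c u ≠ c v := c.valid hadj
  have hparodd : Even (G.dist w u) ↔ ¬ Even (G.dist w v) := by
    rw [← hpu, ← hpv]
    exact fin2_contra (c w) (c u) (c v) hcuv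
  have hne : G.dist w u ≠ G.dist w v := fun he => by rw [he] at hparodd; tauto
  rcases (by omega : G.dist w u = G.dist w v + 1 ∨ G.dist w v = G.dist w u + 1) with h | h
  · exact hS w hwS u hu v hv hwu hwv huv
      (by simp only [gpInterval, Set.mem_setOf_eq]; omega)
  · exact hS w hwS v hv u hu hwv hwu huv.symm
      (by simp only [gpInterval, Set.mem_setOf_eq]; omega)
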